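/- Let f : ℝ^{n×q} → ℝ be proper convex lower semicontinuous, X ∈ ℝ^{n×p}, Y ∈ ℝ^{n×q}, λ > 0, and let B̂ minimize B ↦ f(Y − XB) + λ‖B‖_{2,1}, where ‖B‖_{2,1} is the sum of Euclidean norms of the rows. Let B* ∈ ℝ^{p×q} with row support S*, set Δ = B̂ − B*, and suppose there exists Z in the subdifferential of f at Y − XB* with ‖XᵀZ‖_{2,∞} ≤ λ/2 (where ‖·‖_{2,∞} is the maximum row Euclidean norm). Then ‖Δ_{S*ᶜ}‖_{2,1} ≤ 3‖Δ_{S*}‖_{2,1}. -/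

import Mathlib

open scoped BigOperators
open Matrix Classical

/-- Euclidean norm of a row. -/
noncomputable def rowNorm {q : ℕ} (v : Fin q → ℝ) : ℝ := Real.sqrt (∑ j, (v j) ^ 2)

/-- `ℓ_{2,1}` norm: sum of row Euclidean norms. -/
noncomputable def norm21 {p q : ℕ} (B : Matrix (Fin p) (Fin q) ℝ) : ℝ :=
  ∑ j, rowNorm (B j)

/-- `ℓ_{2,∞}` norm: maximum of row Euclidean norms. -/
noncomputable def norm2inf {p q : ℕ} (B : Matrix (Fin p) (Fin q) ℝ) : ℝ :=
  ⨆ j, rowNorm (B j)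

/-- Restriction of a matrix to a set of rows (zero outside `S`). -/
noncomputable def restrict {p q : ℕ} (B : Matrix (Fin p) (Fin q) ℝ) (S : Set (Fin p)) :
    Matrix (Fin p) (Fin q) ℝ :=
  fun j k => if j ∈ S then B j k else 0

/-- `Z` is a subgradient of `f` at `E`. -/
def InSubdiff {n q : ℕ} (f : Matrix (Fin n) (Fin q) ℝ → ℝ)
    (E Z : Matrix (Fin n) (Fin q) ℝ) : Prop :=
  ∀ A, f A - f E ≥ ∑ i, ∑ j, Z i j * (A i j - E i j)

lemma rowNorm_nonneg {q : ℕ} (v : Fin q → ℝ) : 0 ≤ rowNorm v := Real.sqrt_nonneg _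

lemma rowNorm_eq {q : ℕ} (v : Fin q → ℝ) :
    rowNorm v = ‖(WithLp.equiv 2 (Fin q → ℝ)).symm v‖ := by
  rw [EuclideanSpace.norm_eq]
  simp [rowNorm, Real.norm_eq_abs, sq_abs]

lemma rowNorm_sub_le {q : ℕ} (u v : Fin q → ℝ) :
    rowNorm u - rowNorm v ≤ rowNorm (u - v) := by
  rw [rowNorm_eq, rowNorm_eq, rowNorm_eq]
  exact norm_sub_norm_le _ _

lemma cs_upper {q : ℕ} (u v : Fin q → ℝ) :
    ∑ j, u j * v j ≤ rowNorm u * rowNorm v := by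
  have h := real_inner_le_norm ((WithLp.equiv 2 (Fin q → ℝ)).symm u)
    ((WithLp.equiv 2 (Fin q → ℝ)).symm v)
  rw [← rowNorm_eq, ← rowNorm_eq] at h
  refine le_trans (le_of_eq ?_) h
  simp [PiLp.inner_apply, RCLike.inner_apply]
  exact Finset.sum_congr rfl fun j _ => mul_comm _ _

theorem cone_condition {n p q : ℕ}
    (f : Matrix (Fin n) (Fin q) ℝ → ℝ)
    (hconv : ConvexOn ℝ Set.univ f) (hlsc : LowerSemicontinuous f)
    (X : Matrix (Fin n) (Fin p) ℝ) (Y : Matrix (Fin n) (Fin q) ℝ)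
    (lam : ℝ) (hlam : 0 < lam)
    (Bhat Bstar : Matrix (Fin p) (Fin q) ℝ)
    (hmin : ∀ B : Matrix (Fin p) (Fin q) ℝ,
      f (Y - X * Bhat) + lam * norm21 Bhat ≤ f (Y - X * B) + lam * norm21 B)
    (Z : Matrix (Fin n) (Fin q) ℝ)
    (hZ : InSubdiff f (Y - X * Bstar) Z)
    (hdual : norm2inf (Xᵀ * Z) ≤ lam / 2) :
    norm21 (restrict (Bhat - Bstar) {j | Bstar j = 0}) ≤
      3 * norm21 (restrict (Bhat - Bstar) {j | Bstar j ≠ 0}) := by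
  set Δ : Matrix (Fin p) (Fin q) ℝ := Bhat - Bstar with hΔ
  set a := norm21 (restrict Δ {j | Bstar j = 0}) with ha
  set b := norm21 (restrict Δ {j | Bstar j ≠ 0}) with hb
  -- rowNorm of restricted rows
  have hrow_restrict : ∀ (S : Set (Fin p)) (j : Fin p),
      rowNorm ((restrict Δ S) j) = if j ∈ S then rowNorm (Δ j) else 0 := by
    intro S j
    by_cases hj : j ∈ S
    · have hfun : (restrict Δ S) j = Δ j := by
        funext k; simp [restrict, hj]
      rw [hfun, if_pos hj]
    · have hfun : (restrict Δ S) j = fun _ => 0 := by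
        funext k; simp [restrict, hj]
      rw [hfun, if_neg hj]
      simp [rowNorm]
  -- a + b = sum of row norms of Δ
  have hab : a + b = ∑ j, rowNorm (Δ j) := by
    rw [ha, hb]
    unfold norm21
    rw [← Finset.sum_add_distrib]
    apply Finset.sum_congr rfl
    intro j _
    rw [hrow_restrict, hrow_restrict]
    by_cases hj : Bstar j = 0 <;> simp [hj]
  have ha0 : 0 ≤ a := by
    rw [ha]; exact Finset.sum_nonneg fun j _ => rowNorm_nonneg _
  have hb0 : 0 ≤ b := by
    rw [hb]; exact Finset.sum_nonneg fun j _ => rowNorm_nonneg _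
  -- each row of XᵀZ is bounded
  have hrowZ : ∀ k : Fin p, rowNorm ((Xᵀ * Z) k) ≤ lam / 2 := by
    intro k
    unfold norm2inf at hdual
    exact le_trans
      (le_ciSup (Set.Finite.bddAbove (Set.finite_range fun j => rowNorm ((Xᵀ * Z) j))) k) hdual
  -- subgradient inequality rewritten
  have hsub := hZ (Y - X * Bhat)
  have hentry : ∀ i j, (Y - X * Bhat) i j - (Y - X * Bstar) i j = -((X * Δ) i j) := by
    intro i j
    simp only [hΔ, Matrix.mul_sub, Matrix.sub_apply]
    ring
  have hswap : ∑ i, ∑ j, Z i j * ((X * Δ) i j) = ∑ k, ∑ j, (Xᵀ * Z) k j * Δ k j := by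
    have l1 : ∑ i, ∑ j, Z i j * ((X * Δ) i j)
        = ∑ i : Fin n, ∑ j : Fin q, ∑ k : Fin p, X i k * Z i j * Δ k j := by
      apply Finset.sum_congr rfl; intro i _
      apply Finset.sum_congr rfl; intro j _
      rw [Matrix.mul_apply, Finset.mul_sum]
      apply Finset.sum_congr rfl; intro k _; ring
    have l2 : ∑ k, ∑ j, (Xᵀ * Z) k j * Δ k j
        = ∑ k : Fin p, ∑ j : Fin q, ∑ i : Fin n, X i k * Z i j * Δ k j := by
      apply Finset.sum_congr rfl; intro k _
      apply Finset.sum_congr rfl; intro j _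
      rw [Matrix.mul_apply, Finset.sum_mul]
      apply Finset.sum_congr rfl; intro i _
      simp [Matrix.transpose_apply]
    rw [l1, l2]
    calc ∑ i : Fin n, ∑ j : Fin q, ∑ k : Fin p, X i k * Z i j * Δ k j
        = ∑ j : Fin q, ∑ i : Fin n, ∑ k : Fin p, X i k * Z i j * Δ k j := Finset.sum_comm
      _ = ∑ j : Fin q, ∑ k : Fin p, ∑ i : Fin n, X i k * Z i j * Δ k j :=
          Finset.sum_congr rfl (fun j _ => Finset.sum_comm)
      _ = ∑ k : Fin p, ∑ j : Fin q, ∑ i : Fin n, X i k * Z i j * Δ k j := Finset.sum_comm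
  have heqsum : ∑ i, ∑ j, Z i j * ((Y - X * Bhat) i j - (Y - X * Bstar) i j)
      = -(∑ k, ∑ j, (Xᵀ * Z) k j * Δ k j) := by
    rw [← hswap, ← Finset.sum_neg_distrib]
    apply Finset.sum_congr rfl; intro i _
    rw [← Finset.sum_neg_distrib]
    apply Finset.sum_congr rfl; intro j _
    rw [hentry]; ring
  -- upper bound on the inner product
  have hsum_le : ∑ k, ∑ j, (Xᵀ * Z) k j * Δ k j ≤ (lam / 2) * (a + b) := by
    rw [hab, Finset.mul_sum]
    apply Finset.sum_le_sum
    intro k _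
    calc ∑ j, (Xᵀ * Z) k j * Δ k j ≤ rowNorm ((Xᵀ * Z) k) * rowNorm (Δ k) := cs_upper _ _
      _ ≤ lam / 2 * rowNorm (Δ k) :=
          mul_le_mul_of_nonneg_right (hrowZ k) (rowNorm_nonneg _)
  have hsub2 : f (Y - X * Bhat) - f (Y - X * Bstar) ≥ -((lam / 2) * (a + b)) := by
    rw [heqsum] at hsub
    linarith
  -- step D : norm21 Bstar - norm21 Bhat ≤ b - a
  have hD : norm21 Bstar - norm21 Bhat ≤ b - a := by
    rw [ha, hb]
    unfold norm21
    rw [← Finset.sum_sub_distrib, ← Finset.sum_sub_distrib]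
    apply Finset.sum_le_sum
    intro j _
    rw [hrow_restrict, hrow_restrict]
    have hΔj : ∀ k, Δ j k = Bhat j k - Bstar j k := by
      intro k; simp [hΔ, Matrix.sub_apply]
    split_ifs with hA hB hB
    · exact absurd (hB : Bstar j = 0) (hA : Bstar j ≠ 0)
    · -- Bstar j ≠ 0
      have ht := rowNorm_sub_le (Bstar j) (Bhat j)
      have heq : rowNorm (Bstar j - Bhat j) = rowNorm (Δ j) := by
        unfold rowNorm
        congr 1
        apply Finset.sum_congr rfl
        intro k _
        rw [hΔj k]
        have hsk : (Bstar j - Bhat j) k = Bstar j k - Bhat j k := rfl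
        rw [hsk]; ring
      rw [heq] at ht
      linarith
    · -- Bstar j = 0
      have hj : Bstar j = 0 := hB
      have h1 : rowNorm (Bstar j) = 0 := by rw [hj]; simp [rowNorm]
      have h2 : rowNorm (Δ j) = rowNorm (Bhat j) := by
        unfold rowNorm
        congr 1
        apply Finset.sum_congr rfl
        intro k _
        rw [hΔj k]
        have hz : Bstar j k = 0 := by rw [hj]; rfl
        rw [hz]; ring
      linarith
    · exact absurd (not_not.mp (hA : ¬ Bstar j ≠ 0)) hB
  -- combine
  have hmin' := hmin Bstar
  have hkey : lam * (norm21 Bstar - norm21 Bhat) ≥ -((lam / 2) * (a + b)) := by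
    nlinarith
  have hDlam : lam * (norm21 Bstar - norm21 Bhat) ≤ lam * (b - a) :=
    mul_le_mul_of_nonneg_left hD (le_of_lt hlam)
  nlinarith
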